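/- Let m ≥ 1 and let G be a graph on n vertices with exactly mn edges in which every vertex has degree at least m. Then q*(G) ≤ max{ 15/16, 1 − ρ(G)/(2m) }, where ρ(G) is the edge expansion of G. -/

import Mathlib

set_option maxHeartbeats 1000000


open Finset

noncomputable section

variable {V : Type*} [Fintype V] [DecidableEq V]

/-- The number of edges of `G` with both endpoints in the set `A`, as a real number
(ordered adjacent pairs inside `A`, divided by two). -/
noncomputable def edgesIn (G : SimpleGraph V) (A : Finset V) : ℝ :=
  (Nat.card {p : V × V // G.Adj p.1 p.2 ∧ p.1 ∈ A ∧ p.2 ∈ A} : ℝ) / 2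

/-- The number of edges of `G`, as a real number. -/
noncomputable def edgeCount (G : SimpleGraph V) : ℝ := (Nat.card G.edgeSet : ℝ)

/-- The degree of a vertex, as a real number. -/
noncomputable def degR (G : SimpleGraph V) (v : V) : ℝ := (Nat.card (G.neighborSet v) : ℝ)

/-- The modularity `q_𝒜(G)` of a partition `𝒜` of the vertex set of `G`. -/
noncomputable def modularityOf (G : SimpleGraph V)
    (P : Finpartition (Finset.univ : Finset V)) : ℝ :=
  ∑ A ∈ P.parts,
    (edgesIn G A / edgeCount G - (∑ v ∈ A, degR G v) ^ 2 / (4 * edgeCount G ^ 2))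

/-- The modularity `q*(G)`: the maximum of `q_𝒜(G)` over all partitions `𝒜` of `V(G)`. -/
noncomputable def modularity (G : SimpleGraph V) : ℝ :=
  sSup {q : ℝ | ∃ P : Finpartition (Finset.univ : Finset V), q = modularityOf G P}

/-- `e(S, V∖S)`: the number of edges of `G` with one endpoint in `S` and the other
outside `S`. -/
def cutEdges (G : SimpleGraph V) [DecidableRel G.Adj] (S : Finset V) : ℕ :=
  (Finset.univ.filter
    (fun p : V × V => G.Adj p.1 p.2 ∧ p.1 ∈ S ∧ p.2 ∉ S)).card

/-- The edge expansion `ρ(G) = min{ e(S, V∖S)/|S| : S ⊆ V(G), 1 ≤ |S| ≤ |V(G)|/2 }`. -/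
noncomputable def edgeExpansion (G : SimpleGraph V) [DecidableRel G.Adj] : ℝ :=
  sInf {r : ℝ | ∃ S : Finset V, S.Nonempty ∧ (S.card : ℝ) ≤ (Fintype.card V : ℝ) / 2 ∧
    r = (cutEdges G S : ℝ) / (S.card : ℝ)}

/-- Auxiliary: the number of ordered adjacent pairs inside `A`. -/
def inEdges (G : SimpleGraph V) [DecidableRel G.Adj] (S : Finset V) : ℕ :=
  (Finset.univ.filter
    (fun p : V × V => G.Adj p.1 p.2 ∧ p.1 ∈ S ∧ p.2 ∈ S)).card

lemma aux_count (G : SimpleGraph V) [DecidableRel G.Adj] (A : Finset V) :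
    (univ.filter fun p : V × V => G.Adj p.1 p.2 ∧ p.1 ∈ A).card = ∑ v ∈ A, G.degree v := by
  rw [Finset.card_filter, Fintype.sum_prod_type]
  simp only [← Finset.card_filter]
  rw [← Finset.sum_filter_add_sum_filter_not univ (· ∈ A)]
  have h1 : ∀ a ∈ univ.filter (· ∈ A), (univ.filter fun b => G.Adj a b ∧ a ∈ A).card = G.degree a := by
    intro a ha
    simp only [mem_filter] at ha
    rw [SimpleGraph.degree]
    congr 1
    ext b
    simp [SimpleGraph.mem_neighborFinset, ha.2]
  have h2 : ∀ a ∈ univ.filter (¬ · ∈ A), (univ.filter fun b => G.Adj a b ∧ a ∈ A).card = 0 := by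
    intro a ha
    simp only [mem_filter] at ha
    simp [filter_eq_empty_iff, ha.2]
  rw [Finset.sum_congr rfl h1, Finset.sum_congr rfl h2, Finset.sum_const_zero, add_zero]
  simp [Finset.filter_mem_eq_inter]

lemma split_count (G : SimpleGraph V) [DecidableRel G.Adj] (A : Finset V) :
    inEdges G A + cutEdges G A = ∑ v ∈ A, G.degree v := by
  rw [← aux_count G A, inEdges, cutEdges]
  have := Finset.card_filter_add_card_filter_not
    (s := univ.filter fun p : V × V => G.Adj p.1 p.2 ∧ p.1 ∈ A) (p := fun p : V × V => p.2 ∈ A)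
  rw [Finset.filter_filter, Finset.filter_filter] at this
  rw [← this]
  congr 1 <;> · congr 1; ext p; simp only [mem_filter]; tauto

omit [DecidableEq V] in
lemma degR_eq (G : SimpleGraph V) [DecidableRel G.Adj] (v : V) :
    degR G v = (G.degree v : ℝ) := by
  rw [degR, Nat.card_eq_fintype_card, G.card_neighborSet_eq_degree]

omit [DecidableEq V] in
lemma edgeCount_eq (G : SimpleGraph V) [DecidableRel G.Adj] :
    edgeCount G = (G.edgeFinset.card : ℝ) := by
  rw [edgeCount, Nat.card_eq_fintype_card, SimpleGraph.edgeFinset_card]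

lemma edgesIn_eq (G : SimpleGraph V) [DecidableRel G.Adj] (A : Finset V) :
    edgesIn G A = (inEdges G A : ℝ) / 2 := by
  rw [edgesIn, inEdges, Nat.card_eq_fintype_card, Fintype.card_subtype]

lemma sum_parts (P : Finpartition (Finset.univ : Finset V)) (f : V → ℝ) :
    ∑ A ∈ P.parts, ∑ v ∈ A, f v = ∑ v, f v := by
  conv_rhs => rw [← P.biUnion_parts]
  rw [Finset.sum_biUnion P.supIndep.pairwiseDisjoint]
  simp

/-- if `G` is a graph on `n` vertices with exactly `m·n` edges (`m ≥ 1`)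
in which every vertex has degree at least `m`, then
`q*(G) ≤ max(15/16, 1 − ρ(G)/(2m))`. -/
theorem statement13 (G : SimpleGraph V) [DecidableRel G.Adj]
    (m n : ℕ) (hm : 1 ≤ m) (hn : n = Fintype.card V)
    (hE : G.edgeFinset.card = m * n) (hdeg : ∀ v : V, m ≤ G.degree v) :
    modularity G ≤ max (15 / 16) (1 - edgeExpansion G / (2 * m)) := by
  have hmax0 : (0:ℝ) ≤ max (15 / 16) (1 - edgeExpansion G / (2 * m)) :=
    le_trans (by norm_num) (le_max_left _ _)
  have hEc : edgeCount G = (m : ℝ) * n := by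
    rw [edgeCount_eq, hE]; push_cast; ring
  have key : ∀ P : Finpartition (Finset.univ : Finset V),
      modularityOf G P ≤ max (15 / 16) (1 - edgeExpansion G / (2 * m)) := by
    intro P
    by_cases hn0 : n = 0
    · have hVemp : IsEmpty V := Fintype.card_eq_zero_iff.mp (by omega)
      have hparts : P.parts = ∅ := by
        rw [Finset.eq_empty_iff_forall_notMem]
        intro A hA
        obtain ⟨x, _⟩ := P.nonempty_of_mem_parts hA
        exact hVemp.elim x
      rw [modularityOf, hparts, Finset.sum_empty]
      exact hmax0
    · have hm0 : (0:ℝ) < m := by exact_mod_cast hm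
      have hn1 : (0:ℝ) < n := by
        have : 1 ≤ n := by omega
        exact_mod_cast this
      have hEpos : (0:ℝ) < (m:ℝ) * n := by positivity
      have hsumdeg : ∑ A ∈ P.parts, ∑ v ∈ A, degR G v = 2 * ((m:ℝ) * n) := by
        rw [sum_parts]
        have h := G.sum_degrees_eq_twice_card_edges
        have : ∑ v, degR G v = ((∑ v, G.degree v : ℕ) : ℝ) := by
          push_cast; exact Finset.sum_congr rfl fun v _ => degR_eq G v
        rw [this, h, hE]; push_cast; ring
      have htax_nonneg : ∀ A ∈ P.parts,
          (0:ℝ) ≤ (∑ v ∈ A, degR G v) ^ 2 / (4 * edgeCount G ^ 2) := by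
        intro A _; positivity
    -- case split on a big part
      by_cases hbig : ∃ A ∈ P.parts, (m:ℝ) * n / 2 ≤ ∑ v ∈ A, degR G v
      · obtain ⟨A₀, hA₀, hvol₀⟩ := hbig
        refine le_trans ?_ (le_max_left _ _)
        rw [modularityOf, Finset.sum_sub_distrib]
        have h1 : ∑ A ∈ P.parts, edgesIn G A / edgeCount G ≤ 1 := by
          rw [← Finset.sum_div, div_le_one (by rw [hEc]; exact hEpos), hEc]
          have : ∑ A ∈ P.parts, edgesIn G A ≤ ∑ A ∈ P.parts, (∑ v ∈ A, degR G v) / 2 := by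
            refine Finset.sum_le_sum fun A _ => ?_
            rw [edgesIn_eq]
            have h := split_count G A
            have : (inEdges G A : ℝ) ≤ ∑ v ∈ A, degR G v := by
              have : (inEdges G A : ℝ) + cutEdges G A = ((∑ v ∈ A, G.degree v : ℕ) : ℝ) := by
                exact_mod_cast h
              have h2 : ((∑ v ∈ A, G.degree v : ℕ) : ℝ) = ∑ v ∈ A, degR G v := by
                push_cast; exact (Finset.sum_congr rfl fun v _ => (degR_eq G v).symm)
              nlinarith [Nat.cast_nonneg (α := ℝ) (cutEdges G A)]
            linarith
          calc ∑ A ∈ P.parts, edgesIn G A ≤ _ := this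
            _ = (∑ A ∈ P.parts, ∑ v ∈ A, degR G v) / 2 := by rw [Finset.sum_div]
            _ = (m:ℝ) * n := by rw [hsumdeg]; ring
        have h2 : (1:ℝ)/16 ≤ ∑ A ∈ P.parts, (∑ v ∈ A, degR G v) ^ 2 / (4 * edgeCount G ^ 2) := by
          have hsingle := Finset.single_le_sum htax_nonneg hA₀
          have : (1:ℝ)/16 ≤ (∑ v ∈ A₀, degR G v) ^ 2 / (4 * edgeCount G ^ 2) := by
            rw [hEc, le_div_iff₀ (by positivity)]
            nlinarith [hvol₀, hEpos]
          linarith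
        linarith
      · push_neg at hbig
        refine le_trans ?_ (le_max_right _ _)
        -- expansion applies to every part
        have hρ : ∀ A ∈ P.parts, edgeExpansion G * A.card ≤ (cutEdges G A : ℝ) := by
          intro A hA
          have hAne := P.nonempty_of_mem_parts hA
          have hcardpos : (0:ℝ) < A.card := by exact_mod_cast hAne.card_pos
          have hvolA : (m:ℝ) * A.card ≤ ∑ v ∈ A, degR G v := by
            calc (m:ℝ) * A.card = ∑ _v ∈ A, (m:ℝ) := by
                  rw [Finset.sum_const, nsmul_eq_mul]; ring
              _ ≤ ∑ v ∈ A, degR G v := by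
                  refine Finset.sum_le_sum fun v _ => ?_
                  rw [degR_eq]; exact_mod_cast hdeg v
          have hA2 : (A.card : ℝ) ≤ (Fintype.card V : ℝ) / 2 := by
            have hb := hbig A hA
            rw [← hn]
            nlinarith
          have hbdd : BddBelow {r : ℝ | ∃ S : Finset V, S.Nonempty ∧
              (S.card : ℝ) ≤ (Fintype.card V : ℝ) / 2 ∧
              r = (cutEdges G S : ℝ) / (S.card : ℝ)} := by
            refine ⟨0, ?_⟩
            rintro r ⟨S, _, _, rfl⟩
            positivity
          have hmem : (cutEdges G A : ℝ) / (A.card : ℝ) ∈ {r : ℝ | ∃ S : Finset V, S.Nonempty ∧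
              (S.card : ℝ) ≤ (Fintype.card V : ℝ) / 2 ∧
              r = (cutEdges G S : ℝ) / (S.card : ℝ)} := ⟨A, hAne, hA2, rfl⟩
          have hle : edgeExpansion G ≤ (cutEdges G A : ℝ) / (A.card : ℝ) :=
            csInf_le hbdd hmem
          calc edgeExpansion G * A.card ≤ ((cutEdges G A : ℝ) / (A.card : ℝ)) * A.card :=
                mul_le_mul_of_nonneg_right hle (le_of_lt hcardpos)
            _ = (cutEdges G A : ℝ) := by field_simp
        have hC : edgeExpansion G * n ≤ ∑ A ∈ P.parts, (cutEdges G A : ℝ) := by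
          have hcards : ∑ A ∈ P.parts, (A.card : ℝ) = (n : ℝ) := by
            have := P.sum_card_parts
            rw [Finset.card_univ] at this
            rw [hn]; exact_mod_cast this
          calc edgeExpansion G * n = ∑ A ∈ P.parts, edgeExpansion G * A.card := by
                rw [← Finset.mul_sum, hcards]
            _ ≤ ∑ A ∈ P.parts, (cutEdges G A : ℝ) := Finset.sum_le_sum hρ
        have hIn : ∑ A ∈ P.parts, (inEdges G A : ℝ)
            = 2 * ((m:ℝ) * n) - ∑ A ∈ P.parts, (cutEdges G A : ℝ) := by
          have : ∀ A ∈ P.parts, (inEdges G A : ℝ) = (∑ v ∈ A, degR G v) - cutEdges G A := by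
            intro A _
            have h := split_count G A
            have h1 : (inEdges G A : ℝ) + cutEdges G A = ((∑ v ∈ A, G.degree v : ℕ) : ℝ) := by
              exact_mod_cast h
            have h2 : ((∑ v ∈ A, G.degree v : ℕ) : ℝ) = ∑ v ∈ A, degR G v := by
              push_cast; exact (Finset.sum_congr rfl fun v _ => (degR_eq G v).symm)
            linarith
          rw [Finset.sum_congr rfl this, Finset.sum_sub_distrib, hsumdeg]
        -- now bound the modularity
        rw [modularityOf, Finset.sum_sub_distrib]
        have htax : (0:ℝ) ≤ ∑ A ∈ P.parts, (∑ v ∈ A, degR G v) ^ 2 / (4 * edgeCount G ^ 2) :=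
          Finset.sum_nonneg htax_nonneg
        have hmain : ∑ A ∈ P.parts, edgesIn G A / edgeCount G
            ≤ 1 - edgeExpansion G / (2 * m) := by
          rw [← Finset.sum_div, hEc, div_le_iff₀ hEpos]
          have heI : ∑ A ∈ P.parts, edgesIn G A = (∑ A ∈ P.parts, (inEdges G A : ℝ)) / 2 := by
            rw [Finset.sum_div]
            exact Finset.sum_congr rfl fun A _ => edgesIn_eq G A
          rw [heI, hIn]
          have hdiv : (1 - edgeExpansion G / (2 * m)) * ((m:ℝ) * n)
              = (m:ℝ) * n - edgeExpansion G * n / 2 := by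
            field_simp
          rw [hdiv]
          linarith
        linarith
  rw [modularity]
  exact Real.sSup_le (by rintro q ⟨P, rfl⟩; exact key P) hmax0

end
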